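/- Let $R$ be a commutative ring of prime characteristic $p$, and let $\mathfrak{a}$ be an ideal generated by $u$ elements. For any ideal $J$ with $\mathfrak{a} \subseteq \sqrt{J}$, define $\nu^J_{\mathfrak{a}}(p^e) = \max\{t \in \mathbb{N} \mid \mathfrak{a}^t \not\subseteq J^{[p^e]}\}$. Then for all $e_1, e_2 \in \mathbb{N}$, $\nu^J_{\mathfrak{a}}(p^{e_1+e_2}) \leq p^{e_2}\,u + p^{e_2}\,\nu^J_{\mathfrak{a}}(p^{e_1})$; equivalently, $\frac{\nu^J_{\mathfrak{a}}(p^{e_1+e_2})}{p^{e_1+e_2}} - \frac{\nu^J_{\mathfrak{a}}(p^{e_1})}{p^{e_1}} \leq \frac{u}{p^{e_1}}$. -/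

import Mathlib

/-- The Frobenius-type power `J^{[q]}`: the ideal generated by the `q`-th powers of
elements of `J`. -/
def frobeniusPower {R : Type*} [CommSemiring R] (J : Ideal R) (q : ℕ) : Ideal R :=
  Ideal.span ((fun x => x ^ q) '' (J : Set R))

lemma frobeniusPower_mono {R : Type*} [CommSemiring R] {I J : Ideal R} (h : I ≤ J) (q : ℕ) :
    frobeniusPower I q ≤ frobeniusPower J q :=
  Ideal.span_mono (Set.image_mono h)

lemma pow_mem_frobeniusPower {R : Type*} [CommSemiring R] {J : Ideal R} {x : R}
    (hx : x ∈ J) (q : ℕ) : x ^ q ∈ frobeniusPower J q :=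
  Ideal.subset_span ⟨x, hx, rfl⟩

lemma frobeniusPower_frobeniusPower {R : Type*} [CommRing R] (p : ℕ) (hp : p.Prime)
    [CharP R p] (J : Ideal R) (a b : ℕ) :
    frobeniusPower (frobeniusPower J (p ^ a)) (p ^ b) ≤ frobeniusPower J (p ^ (a + b)) := by
  haveI : Fact p.Prime := ⟨hp⟩
  rw [frobeniusPower, Ideal.span_le]
  rintro _ ⟨x, hx, rfl⟩
  simp only [SetLike.mem_coe] at hx ⊢
  induction hx using Submodule.span_induction with
  | mem y hy =>
      obtain ⟨z, hz, rfl⟩ := hy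
      have : (z ^ p ^ a) ^ p ^ b = z ^ p ^ (a + b) := by
        rw [← pow_mul, ← pow_add]
      rw [this]
      exact pow_mem_frobeniusPower hz _
  | zero =>
      rw [zero_pow (pow_ne_zero _ hp.ne_zero)]
      exact Submodule.zero_mem _
  | add y z _ _ ihy ihz =>
      rw [add_pow_char_pow]
      exact Submodule.add_mem _ ihy ihz
  | smul r y _ ihy =>
      rw [smul_eq_mul, mul_pow]
      exact Ideal.mul_mem_left _ _ ihy

lemma prod_pow_mem_span_pow {R : Type*} [CommSemiring R] (gens : Finset R) (b : R → ℕ)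
    (s : Finset R) (hs : s ⊆ gens) :
    (∏ g ∈ s, g ^ b g) ∈ Ideal.span (gens : Set R) ^ (∑ g ∈ s, b g) := by
  classical
  induction s using Finset.induction with
  | empty => simp [Ideal.one_eq_top]
  | insert _ _ hnotmem ih =>
      rename_i a s
      rw [Finset.prod_insert hnotmem, Finset.sum_insert hnotmem, pow_add]
      exact Ideal.mul_mem_mul
        (Ideal.pow_mem_pow (Ideal.subset_span (hs (Finset.mem_insert_self a s))) _)
        (ih (fun x hx => hs (Finset.mem_insert_of_mem hx)))

/-- The key combinatorial lemma. -/
lemma span_pow_le_frobeniusPower {R : Type*} [CommSemiring R] (gens : Finset R)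
    (N q : ℕ) (hq : 0 < q) :
    Ideal.span (gens : Set R) ^ (gens.card * (q - 1) + q * N + 1)
      ≤ frobeniusPower (Ideal.span (gens : Set R) ^ (N + 1)) q := by
  classical
  set n := gens.card * (q - 1) + q * N + 1 with hn
  rw [show Ideal.span (gens : Set R) = Submodule.span R (gens : Set R) from rfl,
    Submodule.span_pow, Submodule.span_le]
  intro z hz
  rw [Set.mem_pow] at hz
  obtain ⟨f, hf⟩ := hz
  -- count fibers
  set c : R → ℕ := fun g => (Finset.univ.filter (fun i : Fin n => (f i : R) = g)).card with hc
  have hmaps : ∀ i ∈ (Finset.univ : Finset (Fin n)), (f i : R) ∈ gens := fun i _ => (f i).2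
  have hzeq : z = ∏ g ∈ gens, g ^ c g := by
    rw [← hf, List.prod_ofFn]
    rw [← Finset.prod_fiberwise_of_maps_to hmaps (fun i => (f i : R))]
    refine Finset.prod_congr rfl fun g _ => ?_
    rw [hc]
    rw [← Finset.prod_const]
    exact Finset.prod_congr rfl fun i hi => (Finset.mem_filter.mp hi).2
  have hsum : ∑ g ∈ gens, c g = n := by
    rw [hc, ← Finset.card_eq_sum_card_fiberwise hmaps, Finset.card_univ, Fintype.card_fin]
  -- split exponents
  have hsplit : ∀ g : R, c g = q * (c g / q) + c g % q := fun g => (Nat.div_add_mod (c g) q).symm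
  have hrem : ∑ g ∈ gens, c g % q ≤ gens.card * (q - 1) := by
    calc ∑ g ∈ gens, c g % q ≤ ∑ _g ∈ gens, (q - 1) :=
          Finset.sum_le_sum fun g _ => Nat.le_sub_one_of_lt (Nat.mod_lt _ hq)
      _ = gens.card * (q - 1) := by rw [Finset.sum_const, smul_eq_mul]
  have hb : N + 1 ≤ ∑ g ∈ gens, c g / q := by
    have h1 : q * N + 1 ≤ q * ∑ g ∈ gens, c g / q := by
      have : n = q * (∑ g ∈ gens, c g / q) + ∑ g ∈ gens, c g % q := by
        rw [← hsum, Finset.mul_sum, ← Finset.sum_add_distrib]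
        exact Finset.sum_congr rfl fun g _ => hsplit g
      omega
    by_contra hcon
    push_neg at hcon
    have : q * (∑ g ∈ gens, c g / q) ≤ q * N := Nat.mul_le_mul_left q (by omega)
    omega
  have hz2 : (∏ g ∈ gens, g ^ (c g / q)) ∈ Ideal.span (gens : Set R) ^ (N + 1) :=
    Ideal.pow_le_pow_right hb (prod_pow_mem_span_pow gens _ gens le_rfl)
  have hzeq2 : z = (∏ g ∈ gens, g ^ (c g / q)) ^ q * ∏ g ∈ gens, g ^ (c g % q) := by
    rw [hzeq, ← Finset.prod_pow, ← Finset.prod_mul_distrib]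
    refine Finset.prod_congr rfl fun g _ => ?_
    rw [← pow_mul, ← pow_add, mul_comm (c g / q) q, ← hsplit g]
  rw [hzeq2, mul_comm]
  exact Ideal.mul_mem_left _ _ (pow_mem_frobeniusPower hz2 q)

/-- If `𝔞` is generated by `u` elements and `𝔞 ⊆ √J`, then
`ν^J_𝔞(p^{e₁+e₂}) ≤ p^{e₂} u + p^{e₂} ν^J_𝔞(p^{e₁})`. -/
theorem stmt1 {R : Type*} [CommRing R] (p : ℕ) (hp : p.Prime) [CharP R p]
    (𝔞 J : Ideal R) (gens : Finset R) (hgen : 𝔞 = Ideal.span (gens : Set R))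
    (u : ℕ) (hu : gens.card = u) (hrad : 𝔞 ≤ J.radical)
    (ν : ℕ → ℕ)
    (hν : ∀ e : ℕ, IsGreatest {t : ℕ | ¬ 𝔞 ^ t ≤ frobeniusPower J (p ^ e)} (ν e))
    (e₁ e₂ : ℕ) :
    ν (e₁ + e₂) ≤ p ^ e₂ * u + p ^ e₂ * ν e₁ := by
  set q := p ^ e₂ with hqdef
  have hq : 0 < q := pow_pos hp.pos e₂
  set N := ν e₁ with hN
  -- 𝔞^(N+1) ≤ F J (p^e₁)
  have hstep : 𝔞 ^ (N + 1) ≤ frobeniusPower J (p ^ e₁) := by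
    by_contra hcon
    have := (hν e₁).2 hcon
    omega
  by_contra hcontra
  push_neg at hcontra
  have htop : ¬ 𝔞 ^ ν (e₁ + e₂) ≤ frobeniusPower J (p ^ (e₁ + e₂)) := (hν (e₁ + e₂)).1
  apply htop
  have hle : gens.card * (q - 1) + q * N + 1 ≤ ν (e₁ + e₂) := by
    have h1 : gens.card * (q - 1) ≤ q * u := by
      calc gens.card * (q - 1) ≤ gens.card * q := Nat.mul_le_mul_left _ (Nat.sub_le q 1)
        _ = q * u := by rw [hu, mul_comm]
    omega
  calc 𝔞 ^ ν (e₁ + e₂) ≤ 𝔞 ^ (gens.card * (q - 1) + q * N + 1) := Ideal.pow_le_pow_right hle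
    _ ≤ frobeniusPower (𝔞 ^ (N + 1)) q := by
        rw [hgen]; exact span_pow_le_frobeniusPower gens N q hq
    _ ≤ frobeniusPower (frobeniusPower J (p ^ e₁)) (p ^ e₂) := frobeniusPower_mono hstep q
    _ ≤ frobeniusPower J (p ^ (e₁ + e₂)) := frobeniusPower_frobeniusPower p hp J e₁ e₂
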